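/- Let −1 < ν ≤ 0 and let j_{ν,1} be the first positive zero of J_ν. Then (1−p)·𝒥_{ν+1}(x) + p·𝒥_{ν+1}(x)/𝒥_ν(x) > 1 > (1−q)·𝒥_{ν+1}(x) + q·𝒥_{ν+1}(x)/𝒥_ν(x) holds for all x in (0, j_{ν,1}) if and only if p ≥ (ν+1)/(ν+2) and q ≤ 0. -/

import Mathlib

/-- The normalized Bessel function of the first kind,
`𝒥_ν(x) = 2^ν Γ(ν+1) x^{-ν} J_ν(x) = ∑ (-1/4)^n x^(2n) / ((ν+1)_n n!)`. -/
noncomputable def besselJn (ν x : ℝ) : ℝ :=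
  ∑' n : ℕ, ((-1 / 4 : ℝ) ^ n * x ^ (2 * n)) * Real.Gamma (ν + 1) /
    (Real.Gamma (ν + n + 1) * n.factorial)

open Real MeasureTheory intervalIntegral Set

namespace BesselHuygens

/-- Pochhammer-type product `(μ+1)(μ+2)⋯(μ+n)`. -/
noncomputable def P (μ : ℝ) (n : ℕ) : ℝ := ∏ k ∈ Finset.range n, (μ + 1 + k)

/-- Coefficients of the normalized Bessel series. -/
noncomputable def cf (μ : ℝ) (n : ℕ) : ℝ := (-1/4 : ℝ)^n / (n.factorial * P μ n)

lemma P_zero (μ : ℝ) : P μ 0 = 1 := by simp [P]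

lemma P_succ (μ : ℝ) (n : ℕ) : P μ (n+1) = P μ n * (μ + 1 + n) := by
  simp [P, Finset.prod_range_succ]

lemma P_shift (μ : ℝ) (n : ℕ) : P μ (n+1) = (μ + 1) * P (μ+1) n := by
  rw [P, Finset.prod_range_succ']
  simp only [P]
  rw [mul_comm]
  congr 1
  · push_cast; ring_nf
  · apply Finset.prod_congr rfl
    intro k _
    push_cast; ring

lemma P_pos {μ : ℝ} (hμ : -1 < μ) (n : ℕ) : 0 < P μ n := by
  apply Finset.prod_pos
  intro k _
  have : (0:ℝ) ≤ k := Nat.cast_nonneg k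
  linarith

lemma P_ge {μ : ℝ} (hμ : -1 < μ) (n : ℕ) : (μ+1)^n ≤ P μ n := by
  rw [P]
  calc (μ+1)^n = ∏ _k ∈ Finset.range n, (μ+1) := by
        rw [Finset.prod_const, Finset.card_range]
    _ ≤ _ := ?_
  apply Finset.prod_le_prod
  · intro k _; linarith
  · intro k _; have : (0:ℝ) ≤ k := Nat.cast_nonneg k; linarith

lemma Gamma_P {μ : ℝ} (hμ : -1 < μ) (n : ℕ) :
    Real.Gamma (μ + n + 1) = Real.Gamma (μ + 1) * P μ n := by
  induction n with
  | zero => simp [P_zero]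
  | succ n ih =>
    have h1 : μ + (n+1 : ℕ) + 1 = (μ + n + 1) + 1 := by push_cast; ring
    have h2 : μ + (n:ℝ) + 1 ≠ 0 := by
      have : (0:ℝ) ≤ n := Nat.cast_nonneg n
      linarith
    rw [h1, Real.Gamma_add_one h2, ih, P_succ]
    ring

lemma cf_ne_zero {μ : ℝ} (hμ : -1 < μ) (n : ℕ) : cf μ n ≠ 0 := by
  have h1 : ((-1/4 : ℝ))^n ≠ 0 := pow_ne_zero _ (by norm_num)
  have hP : P μ n ≠ 0 := (P_pos hμ n).ne'
  have hF : (n.factorial : ℝ) ≠ 0 := Nat.cast_ne_zero.2 n.factorial_ne_zero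
  exact div_ne_zero h1 (mul_ne_zero hF hP)

lemma besselJn_eq {μ : ℝ} (hμ : -1 < μ) (x : ℝ) :
    besselJn μ x = ∑' n : ℕ, cf μ n * x ^ (2*n) := by
  unfold besselJn
  apply tsum_congr
  intro n
  have hG : Real.Gamma (μ + 1) ≠ 0 := (Real.Gamma_pos_of_pos (by linarith)).ne'
  have hGn : Real.Gamma (μ + n + 1) = Real.Gamma (μ + 1) * P μ n := Gamma_P hμ n
  have hP : P μ n ≠ 0 := (P_pos hμ n).ne'
  have hF : (n.factorial : ℝ) ≠ 0 := Nat.cast_ne_zero.2 n.factorial_ne_zero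
  rw [hGn, cf]
  field_simp

lemma cf_abs_le {μ : ℝ} (hμ : -1 < μ) (n : ℕ) :
    |cf μ n| ≤ (1/(4*(μ+1)))^n / n.factorial := by
  have hμ1 : (0:ℝ) < μ + 1 := by linarith
  have hP := P_pos hμ n
  have hPge := P_ge hμ n
  have hF : (0:ℝ) < n.factorial := by positivity
  rw [cf, abs_div, abs_pow]
  have h1 : |(-1/4 : ℝ)| = 1/4 := by norm_num
  rw [h1, abs_of_pos (by positivity)]
  rw [div_le_div_iff₀ (by positivity) (by positivity)]
  have e : ((1:ℝ)/(4*(μ+1)))^n * (μ+1)^n = (1/4)^n := by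
    rw [← mul_pow]; congr 1; field_simp
  calc (1/4:ℝ)^n * n.factorial = ((1/(4*(μ+1)))^n * (μ+1)^n) * n.factorial := by rw [e]
    _ ≤ (1/(4*(μ+1)))^n * (↑n.factorial * P μ n) := by
        rw [mul_assoc]
        apply mul_le_mul_of_nonneg_left _ (by positivity)
        rw [mul_comm ((μ+1)^n)]
        exact mul_le_mul_of_nonneg_left hPge hF.le

/-- Summability helper. -/
lemma summable_aux {c : ℕ → ℝ} {A r : ℝ} (hc : ∀ n, |c n| ≤ A * r^n / n.factorial)
    (x : ℝ) : Summable (fun n => c n * x^(2*n)) := by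
  have hr : ∀ n, |c n * x^(2*n)| ≤ A * (r*x^2)^n / n.factorial := by
    intro n
    rw [abs_mul]
    have hx : |x ^ (2*n)| = (x^2)^n := by
      rw [pow_mul, abs_pow, abs_of_nonneg (sq_nonneg x)]
    rw [hx]
    calc |c n| * (x^2)^n ≤ (A * r^n / n.factorial) * (x^2)^n := by
          exact mul_le_mul_of_nonneg_right (hc n) (by positivity)
      _ = A * (r*x^2)^n / n.factorial := by rw [mul_pow]; ring
  apply Summable.of_abs
  apply Summable.of_nonneg_of_le (fun n => abs_nonneg _) hr
  have : Summable (fun n : ℕ => A * ((r*x^2)^n / n.factorial)) :=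
    (Real.summable_pow_div_factorial (r*x^2)).mul_left A
  apply this.congr
  intro n; ring

lemma summable_cf {μ : ℝ} (hμ : -1 < μ) (x : ℝ) :
    Summable (fun n => cf μ n * x^(2*n)) := by
  apply summable_aux (A := 1) (r := 1/(4*(μ+1)))
  intro n
  simpa using cf_abs_le hμ n

/-- Continuity helper for even power series. -/
lemma continuous_aux {c : ℕ → ℝ} {A r : ℝ} (hA : 0 ≤ A) (hr : 0 ≤ r)
    (hc : ∀ n, |c n| ≤ A * r^n / n.factorial) :
    Continuous (fun x : ℝ => ∑' n, c n * x^(2*n)) := by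
  rw [continuous_iff_continuousAt]
  intro x₀
  have hR : 0 < |x₀| + 1 := by positivity
  set R := |x₀| + 1 with hRdef
  have h1 : ContinuousOn (fun x : ℝ => ∑' n, c n * x^(2*n)) (Icc (-R) R) := by
    apply continuousOn_tsum (u := fun n => A * (r*R^2)^n / n.factorial)
    · intro i
      exact (continuous_const.mul (continuous_pow _)).continuousOn
    · have : Summable (fun n : ℕ => A * ((r*R^2)^n / n.factorial)) :=
        (Real.summable_pow_div_factorial (r*R^2)).mul_left A
      apply this.congr
      intro n; ring
    · intro n x hx
      have hxR : |x| ≤ R := by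
        rw [abs_le]; exact ⟨hx.1, hx.2⟩
      have hx2 : x^2 ≤ R^2 := by
        calc x^2 = |x|^2 := (sq_abs x).symm
          _ ≤ R^2 := by apply pow_le_pow_left₀ (abs_nonneg x) hxR
      rw [Real.norm_eq_abs, abs_mul]
      have h2 : |x ^ (2*n)| = (x^2)^n := by
        rw [pow_mul, abs_pow, abs_of_nonneg (sq_nonneg x)]
      rw [h2]
      calc |c n| * (x^2)^n ≤ (A * r^n / n.factorial) * (R^2)^n := by
            apply mul_le_mul (hc n) (pow_le_pow_left₀ (sq_nonneg x) hx2 n) (by positivity)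
              (by positivity)
        _ = A * (r*R^2)^n / n.factorial := by rw [mul_pow]; ring
  apply h1.continuousAt
  apply Icc_mem_nhds
  · have := abs_nonneg x₀; have := neg_abs_le x₀; linarith
  · have := le_abs_self x₀; linarith

lemma continuous_besselJn {μ : ℝ} (hμ : -1 < μ) : Continuous (besselJn μ) := by
  have hμ1 : (0:ℝ) < μ + 1 := by linarith
  have : besselJn μ = fun x => ∑' n, cf μ n * x^(2*n) := by
    funext x; exact besselJn_eq hμ x
  rw [this]
  apply continuous_aux (A := 1) (r := 1/(4*(μ+1))) zero_le_one (by positivity)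
  intro n
  simpa using cf_abs_le hμ n

lemma besselJn_zero {μ : ℝ} (hμ : -1 < μ) : besselJn μ 0 = 1 := by
  rw [besselJn_eq hμ]
  rw [tsum_eq_single 0]
  · simp [cf, P_zero]
  · intro n hn
    have : (0:ℝ) ^ (2*n) = 0 := by
      apply zero_pow
      omega
    simp [this]

/-- The "tail" function: `besselJn μ x = 1 + x^2 * D μ x`. -/
noncomputable def D (μ x : ℝ) : ℝ := ∑' n : ℕ, cf μ (n+1) * x^(2*n)

lemma cf_shift_abs_le {μ : ℝ} (hμ : -1 < μ) (n : ℕ) :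
    |cf μ (n+1)| ≤ (1/(4*(μ+1))) * (1/(4*(μ+1)))^n / n.factorial := by
  have hμ1 : (0:ℝ) < μ + 1 := by linarith
  calc |cf μ (n+1)| ≤ (1/(4*(μ+1)))^(n+1) / (n+1).factorial := cf_abs_le hμ (n+1)
    _ ≤ (1/(4*(μ+1))) * (1/(4*(μ+1)))^n / n.factorial := by
        rw [pow_succ]
        apply div_le_div₀ (by positivity) (by rw [mul_comm]) (by positivity)
        · exact_mod_cast Nat.factorial_le (Nat.le_succ n)

lemma continuous_D {μ : ℝ} (hμ : -1 < μ) : Continuous (D μ) := by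
  have hμ1 : (0:ℝ) < μ + 1 := by linarith
  apply continuous_aux (A := 1/(4*(μ+1))) (r := 1/(4*(μ+1))) (by positivity) (by positivity)
  exact cf_shift_abs_le hμ

lemma summable_cf_shift {μ : ℝ} (hμ : -1 < μ) (x : ℝ) :
    Summable (fun n => cf μ (n+1) * x^(2*n)) :=
  summable_aux (cf_shift_abs_le hμ) x

lemma besselJn_decomp {μ : ℝ} (hμ : -1 < μ) (x : ℝ) :
    besselJn μ x = 1 + x^2 * D μ x := by
  rw [besselJn_eq hμ, Summable.tsum_eq_zero_add (summable_cf hμ x)]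
  have h0 : cf μ 0 * x^(2*0) = 1 := by simp [cf, P_zero]
  rw [h0]
  congr 1
  rw [D, ← tsum_mul_left]
  apply tsum_congr
  intro n
  ring

lemma D_zero {μ : ℝ} (hμ : -1 < μ) : D μ 0 = -(1/(4*(μ+1))) := by
  have hμ1 : (0:ℝ) < μ + 1 := by linarith
  rw [D, tsum_eq_single 0]
  · simp only [pow_zero, mul_one, cf]
    have hP1 : P μ 1 = μ + 1 := by rw [P_succ, P_zero]; norm_num
    rw [hP1]
    rw [show ((0:ℕ)+1) = 1 from rfl]
    norm_num [Nat.factorial]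
    field_simp
  · intro n hn
    have : (0:ℝ) ^ (2*n) = 0 := by apply zero_pow; omega
    simp [this]

lemma cf_step {μ : ℝ} (hμ : -1 < μ) (n : ℕ) :
    cf (μ+1) (n+1) - cf μ (n+1) = (1/(4*(μ+1)*(μ+2))) * cf (μ+2) n := by
  have hμ1 : (0:ℝ) < μ+1 := by linarith
  have hμ2 : (0:ℝ) < μ+2 := by linarith
  have hn : (0:ℝ) < μ+2+n := by positivity
  have hq : 0 < P (μ+2) n := P_pos (by linarith) n
  have hf : (0:ℝ) < n.factorial := by positivity
  have e1 : P μ (n+1) = (μ+1) * P (μ+1) n := P_shift μ n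
  have e2 : P (μ+1) (n+1) = (μ+2) * P (μ+2) n := by
    have h := P_shift (μ+1) n
    have harg : μ+1+1 = μ+2 := by ring
    rw [harg] at h
    exact h
  have e3 : P (μ+1) (n+1) = P (μ+1) n * (μ+2+n) := by
    rw [P_succ]; ring_nf
  have hsub : P (μ+1) n = (μ+2) * P (μ+2) n / (μ+2+↑n) := by
    rw [eq_div_iff hn.ne', ← e3, e2]
  rw [cf, cf, cf, e1, e2, hsub]
  rw [pow_succ, Nat.factorial_succ]
  push_cast
  field_simp
  ring

lemma bessel_rec {μ : ℝ} (hμ : -1 < μ) (x : ℝ) :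
    besselJn μ x = besselJn (μ+1) x - x^2 * besselJn (μ+2) x / (4*(μ+1)*(μ+2)) := by
  have hμ1 : -1 < μ+1 := by linarith
  have hμ2 : -1 < μ+2 := by linarith
  have hsum1 := summable_cf hμ x
  have hsum2 := summable_cf hμ1 x
  have hsum3 := summable_cf hμ2 x
  have hg : Summable (fun n => (cf (μ+1) n - cf μ n) * x^(2*n)) := by
    apply (hsum2.sub hsum1).congr
    intro n; ring
  have key : besselJn (μ+1) x - besselJn μ x
      = x^2 * besselJn (μ+2) x / (4*(μ+1)*(μ+2)) := by
    rw [besselJn_eq hμ, besselJn_eq hμ1, besselJn_eq hμ2]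
    rw [← Summable.tsum_sub hsum2 hsum1]
    have h1 : (fun n => cf (μ+1) n * x^(2*n) - cf μ n * x^(2*n))
        = fun n => (cf (μ+1) n - cf μ n) * x^(2*n) := by
      funext n; ring
    rw [h1, Summable.tsum_eq_zero_add hg]
    have h0 : (cf (μ+1) 0 - cf μ 0) * x^(2*0) = 0 := by
      simp [cf, P_zero]
    rw [h0, zero_add]
    have h2 : ∀ n : ℕ, (cf (μ+1) (n+1) - cf μ (n+1)) * x^(2*(n+1))
        = (x^2/(4*(μ+1)*(μ+2))) * (cf (μ+2) n * x^(2*n)) := by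
      intro n
      rw [cf_step hμ n]
      ring
    calc ∑' n, (cf (μ+1) (n+1) - cf μ (n+1)) * x^(2*(n+1))
        = ∑' n, (x^2/(4*(μ+1)*(μ+2))) * (cf (μ+2) n * x^(2*n)) := tsum_congr h2
      _ = (x^2/(4*(μ+1)*(μ+2))) * ∑' n, cf (μ+2) n * x^(2*n) := tsum_mul_left
      _ = x^2 * (∑' n, cf (μ+2) n * x^(2*n)) / (4*(μ+1)*(μ+2)) := by ring
  linarith [key]

lemma cf_J1 {μ : ℝ} (hμ : -1 < μ) (n : ℕ) :
    cf (μ+1) n * (1/(2*n+2)) = -(2*(μ+1)) * cf μ (n+1) := by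
  have hμ1 : (0:ℝ) < μ+1 := by linarith
  have hp : 0 < P (μ+1) n := P_pos (by linarith) n
  have hf : (0:ℝ) < n.factorial := by positivity
  rw [cf, cf, P_shift, pow_succ, Nat.factorial_succ]
  push_cast
  field_simp
  ring

lemma J1 {μ x : ℝ} (hμ : -1 < μ) (hx : 0 ≤ x) :
    ∫ t in (0:ℝ)..x, t * besselJn (μ+1) t = 2*(μ+1)*(1 - besselJn μ x) := by
  have hμ1 : -1 < μ+1 := by linarith
  have hμp : (0:ℝ) < μ+1 := by linarith
  have hint : ∀ t : ℝ, t * besselJn (μ+1) t = ∑' n : ℕ, cf (μ+1) n * t^(2*n+1) := by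
    intro t
    rw [besselJn_eq hμ1, ← tsum_mul_left]
    apply tsum_congr; intro n; ring
  rw [integral_of_le hx]
  simp only [hint]
  have hF_int : ∀ n : ℕ, Integrable (fun t => cf (μ+1) n * t^(2*n+1))
      (volume.restrict (Ioc 0 x)) := fun n =>
    (continuous_const.mul (continuous_pow _)).integrableOn_Ioc
  have hbound : ∀ n : ℕ, (∫ t in Ioc (0:ℝ) x, ‖cf (μ+1) n * t^(2*n+1)‖)
      ≤ |cf (μ+1) n * x^(2*n)| * x^2 := by
    intro n
    have h1 : ∫ t in Ioc (0:ℝ) x, ‖cf (μ+1) n * t^(2*n+1)‖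
        ≤ ∫ _t in Ioc (0:ℝ) x, |cf (μ+1) n| * x^(2*n+1) := by
      apply setIntegral_mono_on (hF_int n).norm (integrableOn_const (by
        exact measure_Ioc_lt_top.ne)) measurableSet_Ioc
      intro t ht
      rw [norm_mul, Real.norm_eq_abs, Real.norm_eq_abs]
      apply mul_le_mul_of_nonneg_left _ (abs_nonneg _)
      rw [abs_of_nonneg (pow_nonneg ht.1.le _)]
      exact pow_le_pow_left₀ ht.1.le ht.2 _
    calc ∫ t in Ioc (0:ℝ) x, ‖cf (μ+1) n * t^(2*n+1)‖
        ≤ ∫ _t in Ioc (0:ℝ) x, |cf (μ+1) n| * x^(2*n+1) := h1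
      _ = |cf (μ+1) n| * x^(2*n+1) * x := by
          rw [setIntegral_const, measureReal_def, Real.volume_Ioc, smul_eq_mul]
          rw [ENNReal.toReal_ofReal (by linarith)]
          ring
      _ = |cf (μ+1) n * x^(2*n)| * x^2 := by
          rw [abs_mul, abs_of_nonneg (pow_nonneg hx (2*n)), pow_succ]
          ring
    -- may need fixing
  have hnorm : Summable fun n : ℕ => ∫ t in Ioc (0:ℝ) x, ‖cf (μ+1) n * t^(2*n+1)‖ := by
    apply Summable.of_nonneg_of_le
      (fun n => integral_nonneg (fun t => norm_nonneg _)) hbound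
    exact ((summable_cf hμ1 x).abs.mul_right (x^2))
  rw [← MeasureTheory.integral_tsum_of_summable_integral_norm hF_int hnorm]
  have hval : ∀ n : ℕ, (∫ t in Ioc (0:ℝ) x, cf (μ+1) n * t^(2*n+1))
      = cf (μ+1) n * (x^(2*n+2) / (2*n+2)) := by
    intro n
    rw [MeasureTheory.integral_const_mul]
    congr 1
    rw [← integral_of_le hx, integral_pow]
    have : (0:ℝ)^(2*n+1+1) = 0 := by
      apply zero_pow; omega
    rw [this]
    push_cast
    ring
  simp only [hval]
  rw [besselJn_decomp hμ]
  have hr : 2*(μ+1)*(1 - (1 + x^2 * D μ x)) = (-(2*(μ+1))*x^2) * D μ x := by ring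
  rw [hr, D, ← tsum_mul_left]
  apply tsum_congr
  intro n
  calc cf (μ+1) n * (x^(2*n+2)/(2*n+2))
      = (cf (μ+1) n * (1/(2*(n:ℝ)+2))) * (x^2 * x^(2*n)) := by rw [pow_add]; ring
    _ = (-(2*(μ+1))*x^2) * (cf μ (n+1) * x^(2*n)) := by rw [cf_J1 hμ n]; ring

lemma cf_J2 {μ : ℝ} (hμ : -1 < μ) (n : ℕ) :
    cf μ n * (1/(2*μ+2+2*n)) = cf (μ+1) n * (1/(2*(μ+1))) := by
  have hμ1 : (0:ℝ) < μ+1 := by linarith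
  have hcast : (0:ℝ) ≤ n := Nat.cast_nonneg n
  have hn : (0:ℝ) < μ+1+n := by linarith
  have h2n : (0:ℝ) < 2*μ+2+2*n := by linarith
  have hp : 0 < P (μ+1) n := P_pos (by linarith) n
  have hf : (0:ℝ) < n.factorial := by positivity
  have key : P μ n * (μ+1+n) = (μ+1) * P (μ+1) n := by
    have h1 := P_succ μ n
    have h2 := P_shift μ n
    rw [← h1, h2]
  have hsub : P μ n = (μ+1) * P (μ+1) n / (μ+1+n) := by
    rw [eq_div_iff hn.ne']; exact key
  rw [cf, cf, hsub]
  field_simp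

lemma J2 {μ x : ℝ} (hμ : -1 < μ) (hx : 0 < x) :
    ∫ t in (0:ℝ)..x, t ^ (2*μ+1) * besselJn μ t
      = x ^ (2*μ+2) * besselJn (μ+1) x / (2*(μ+1)) := by
  have hμ1 : -1 < μ+1 := by linarith
  have hμp : (0:ℝ) < μ+1 := by linarith
  have he : (-1:ℝ) < 2*μ+1 := by linarith
  rw [integral_of_le hx.le]
  have hint : EqOn (fun t : ℝ => t ^ (2*μ+1) * besselJn μ t)
      (fun t : ℝ => ∑' n : ℕ, cf μ n * (t ^ (2*μ+1) * t^(2*n))) (Ioc 0 x) := by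
    intro t _
    simp only
    rw [besselJn_eq hμ, ← tsum_mul_left]
    apply tsum_congr; intro n; ring
  rw [setIntegral_congr_fun measurableSet_Ioc hint]
  have hmono : ∀ n : ℕ, IntervalIntegrable (fun t : ℝ => t ^ (2*μ+1) * t^(2*n)) volume 0 x :=
    fun n => (intervalIntegrable_rpow' he).mul_continuousOn (continuous_pow _).continuousOn
  have hF_int : ∀ n : ℕ, Integrable (fun t => cf μ n * (t ^ (2*μ+1) * t^(2*n)))
      (volume.restrict (Ioc 0 x)) := fun n => ((hmono n).const_mul (cf μ n)).1
  have hCx_int : IntegrableOn (fun t : ℝ => t ^ (2*μ+1)) (Ioc 0 x) volume :=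
    (intervalIntegrable_rpow' he (a := 0) (b := x)).1
  set Cx : ℝ := ∫ t in Ioc (0:ℝ) x, t ^ (2*μ+1) with hCx
  have hbound : ∀ n : ℕ, (∫ t in Ioc (0:ℝ) x, ‖cf μ n * (t^(2*μ+1) * t^(2*n))‖)
      ≤ |cf μ n * x^(2*n)| * Cx := by
    intro n
    have hpt : ∀ t ∈ Ioc (0:ℝ) x, ‖cf μ n * (t^(2*μ+1) * t^(2*n))‖
        ≤ |cf μ n * x^(2*n)| * t^(2*μ+1) := by
      intro t ht
      rw [Real.norm_eq_abs, abs_mul, abs_mul, abs_mul]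
      rw [abs_of_pos (Real.rpow_pos_of_pos ht.1 _), abs_of_pos (pow_pos ht.1 _),
        abs_of_pos (pow_pos hx _)]
      have h1 : t^(2*n) ≤ x^(2*n) := pow_le_pow_left₀ ht.1.le ht.2 _
      have h2 : (0:ℝ) < t^(2*μ+1) := Real.rpow_pos_of_pos ht.1 _
      nlinarith [mul_nonneg (mul_nonneg (abs_nonneg (cf μ n)) h2.le) (sub_nonneg.2 h1)]
    calc ∫ t in Ioc (0:ℝ) x, ‖cf μ n * (t^(2*μ+1) * t^(2*n))‖
        ≤ ∫ t in Ioc (0:ℝ) x, |cf μ n * x^(2*n)| * t^(2*μ+1) :=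
          setIntegral_mono_on (hF_int n).norm (hCx_int.const_mul _) measurableSet_Ioc hpt
      _ = |cf μ n * x^(2*n)| * Cx := by rw [MeasureTheory.integral_const_mul]
  have hnorm : Summable (fun n : ℕ => ∫ t in Ioc (0:ℝ) x, ‖cf μ n * (t^(2*μ+1) * t^(2*n))‖) :=
    Summable.of_nonneg_of_le (fun n => integral_nonneg (fun t => norm_nonneg _)) hbound
      (((summable_cf hμ x).abs).mul_right Cx)
  rw [← MeasureTheory.integral_tsum_of_summable_integral_norm hF_int hnorm]
  have hval : ∀ n : ℕ, (∫ t in Ioc (0:ℝ) x, cf μ n * (t^(2*μ+1) * t^(2*n)))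
      = cf μ n * (x ^ (2*μ+2+2*(n:ℝ)) * (1/(2*μ+2+2*n))) := by
    intro n
    rw [MeasureTheory.integral_const_mul]
    congr 1
    have h1 : EqOn (fun t : ℝ => t^(2*μ+1) * t^(2*n))
        (fun t : ℝ => t ^ (2*μ+1+2*(n:ℝ))) (Ioc 0 x) := by
      intro t ht
      simp only
      rw [← Real.rpow_natCast t (2*n), ← Real.rpow_add ht.1]
      congr 1
      push_cast; ring
    rw [setIntegral_congr_fun measurableSet_Ioc h1]
    have hcast : (0:ℝ) ≤ n := Nat.cast_nonneg n
    rw [← integral_of_le hx.le, integral_rpow (Or.inl (by linarith))]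
    rw [Real.zero_rpow (by linarith)]
    rw [sub_zero, show (2*μ+1+2*(n:ℝ))+1 = 2*μ+2+2*(n:ℝ) by ring]
    ring
  simp only [hval]
  have hterm : ∀ n : ℕ, cf μ n * (x ^ (2*μ+2+2*(n:ℝ)) * (1/(2*μ+2+2*n)))
      = (x ^ (2*μ+2) / (2*(μ+1))) * (cf (μ+1) n * x^(2*n)) := by
    intro n
    have hxp : x ^ (2*μ+2+2*(n:ℝ)) = x ^ (2*μ+2) * x ^ (2*n) := by
      rw [show 2*μ+2+2*(n:ℝ) = (2*μ+2) + ((2*n : ℕ) : ℝ) by push_cast; ring]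
      rw [Real.rpow_add hx, Real.rpow_natCast]
    rw [hxp]
    have := cf_J2 hμ n
    calc cf μ n * (x ^ (2*μ+2) * x^(2*n) * (1/(2*μ+2+2*n)))
        = (cf μ n * (1/(2*μ+2+2*n))) * (x ^ (2*μ+2) * x^(2*n)) := by ring
      _ = (cf (μ+1) n * (1/(2*(μ+1)))) * (x ^ (2*μ+2) * x^(2*n)) := by rw [this]
      _ = (x ^ (2*μ+2) / (2*(μ+1))) * (cf (μ+1) n * x^(2*n)) := by ring
  rw [tsum_congr hterm, tsum_mul_left, besselJn_eq hμ1]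
  ring

/-- Positivity propagates up the order via `J2`. -/
lemma pos_step {μ : ℝ} (hμ : -1 < μ) {b : ℝ}
    (h : ∀ t : ℝ, 0 < t → t < b → 0 < besselJn μ t) :
    ∀ x : ℝ, 0 < x → x ≤ b → 0 < besselJn (μ+1) x := by
  intro x hx0 hxb
  have hμp : (0:ℝ) < μ+1 := by linarith
  have hJ2 := J2 hμ hx0
  have hpos : 0 < ∫ t in (0:ℝ)..x, t ^ (2*μ+1) * besselJn μ t := by
    apply intervalIntegral_pos_of_pos_on
    · exact (intervalIntegrable_rpow' (by linarith)).mul_continuousOn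
        (continuous_besselJn hμ).continuousOn
    · intro t ht
      exact mul_pos (Real.rpow_pos_of_pos ht.1 _)
        (h t ht.1 (lt_of_lt_of_le ht.2 hxb))
    · exact hx0
  rw [hJ2] at hpos
  have hxp : (0:ℝ) < x ^ (2*μ+2) := Real.rpow_pos_of_pos hx0 _
  by_contra hc; push_neg at hc
  have h2 : 0 < x ^ (2*μ+2) * besselJn (μ+1) x := by
    have h3 := mul_pos hpos (show (0:ℝ) < 2*(μ+1) by linarith)
    rwa [div_mul_cancel₀] at h3
    exact (show (0:ℝ) < 2*(μ+1) by linarith).ne'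
  nlinarith [mul_nonpos_of_nonneg_of_nonpos hxp.le hc]

/-- Strict decrease propagates down via `J1`. -/
lemma decr_step {μ : ℝ} (hμ : -1 < μ) {b : ℝ}
    (h : ∀ t : ℝ, 0 < t → t ≤ b → 0 < besselJn (μ+1) t) :
    ∀ x₁ x₂ : ℝ, 0 ≤ x₁ → x₁ < x₂ → x₂ ≤ b → besselJn μ x₂ < besselJn μ x₁ := by
  intro x₁ x₂ h1 h12 h2b
  have hμ1 : -1 < μ+1 := by linarith
  have hμp : (0:ℝ) < μ+1 := by linarith
  have hJa := J1 hμ h1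
  have hJb := J1 hμ (h1.trans h12.le)
  have hI1 : IntervalIntegrable (fun t => t * besselJn (μ+1) t) volume 0 x₁ :=
    (continuous_id.mul (continuous_besselJn hμ1)).intervalIntegrable _ _
  have hI2 : IntervalIntegrable (fun t => t * besselJn (μ+1) t) volume 0 x₂ :=
    (continuous_id.mul (continuous_besselJn hμ1)).intervalIntegrable _ _
  have hsub : (∫ t in (0:ℝ)..x₂, t * besselJn (μ+1) t)
      - (∫ t in (0:ℝ)..x₁, t * besselJn (μ+1) t)
      = ∫ t in x₁..x₂, t * besselJn (μ+1) t :=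
    intervalIntegral.integral_interval_sub_left hI2 hI1
  have hpos : 0 < ∫ t in x₁..x₂, t * besselJn (μ+1) t := by
    apply intervalIntegral_pos_of_pos_on
    · exact (continuous_id.mul (continuous_besselJn hμ1)).intervalIntegrable _ _
    · intro t ht
      exact mul_pos (h1.trans_lt ht.1) (h t (h1.trans_lt ht.1) (ht.2.le.trans h2b))
    · exact h12
  nlinarith [hJa, hJb, hsub, hpos]

/-- `1 - 𝒥_μ(x) ≤ x²/(4(μ+1))` given `𝒥_{μ+1} ≤ 1` on `[0,b]`. -/
lemma one_sub_le {μ : ℝ} (hμ : -1 < μ) {b x : ℝ} (hx : 0 < x) (hxb : x ≤ b)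
    (hvle : ∀ t : ℝ, 0 ≤ t → t ≤ b → besselJn (μ+1) t ≤ 1) :
    2*(μ+1)*(1 - besselJn μ x) ≤ x^2/2 := by
  have hμ1 : -1 < μ+1 := by linarith
  rw [← J1 hμ hx.le]
  calc ∫ t in (0:ℝ)..x, t * besselJn (μ+1) t ≤ ∫ t in (0:ℝ)..x, t := by
        apply integral_mono_on hx.le
          ((continuous_id.mul (continuous_besselJn hμ1)).intervalIntegrable _ _)
          (continuous_id.intervalIntegrable _ _)
        intro t ht
        have h1 : besselJn (μ+1) t ≤ 1 := hvle t ht.1 (ht.2.trans hxb)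
        have h2 := mul_le_mul_of_nonneg_left h1 ht.1
        simpa using h2
    _ = x^2/2 := by rw [integral_id]; ring

/-- `𝒥_{μ+1}(x) < 𝒥_{μ+2}(x)` given `𝒥_{μ+1}` strictly decreasing before `x`. -/
lemma step_gt {μ : ℝ} (hμ : -1 < μ) {x : ℝ} (hx : 0 < x)
    (hdec : ∀ t : ℝ, 0 < t → t < x → besselJn (μ+1) x < besselJn (μ+1) t) :
    besselJn (μ+1) x < besselJn (μ+2) x := by
  have hμ1 : -1 < μ+1 := by linarith
  have hμ2 : (0:ℝ) < μ+2 := by linarith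
  have he : (-1:ℝ) < 2*(μ+1)+1 := by linarith
  set c := besselJn (μ+1) x with hc
  have hJ := J2 (μ := μ+1) hμ1 hx
  have harg : μ+1+1 = μ+2 := by ring
  rw [harg] at hJ
  have hIv : IntervalIntegrable (fun t : ℝ => t ^ (2*(μ+1)+1) * besselJn (μ+1) t) volume 0 x :=
    (intervalIntegrable_rpow' he).mul_continuousOn (continuous_besselJn hμ1).continuousOn
  have hIc : IntervalIntegrable (fun t : ℝ => t ^ (2*(μ+1)+1) * c) volume 0 x :=
    (intervalIntegrable_rpow' he).mul_continuousOn continuousOn_const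
  have hpos : 0 < ∫ t in (0:ℝ)..x, (t ^ (2*(μ+1)+1) * besselJn (μ+1) t - t ^ (2*(μ+1)+1) * c) := by
    apply intervalIntegral_pos_of_pos_on (hIv.sub hIc)
    · intro t ht
      have h1 : (0:ℝ) < t ^ (2*(μ+1)+1) := Real.rpow_pos_of_pos ht.1 _
      have h2 : c < besselJn (μ+1) t := hdec t ht.1 ht.2
      nlinarith
    · exact hx
  rw [intervalIntegral.integral_sub hIv hIc] at hpos
  have hcval : (∫ t in (0:ℝ)..x, t ^ (2*(μ+1)+1) * c)
      = c * (x ^ (2*(μ+1)+2) / (2*(μ+1)+2)) := by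
    rw [intervalIntegral.integral_mul_const, integral_rpow (Or.inl he)]
    rw [Real.zero_rpow (by linarith), sub_zero]
    rw [show (2*(μ+1)+1)+1 = 2*(μ+1)+2 by ring]
    ring
  rw [hcval, hJ] at hpos
  have hxp : (0:ℝ) < x ^ (2*(μ+1)+2) := Real.rpow_pos_of_pos hx _
  have hD : (0:ℝ) < 2*(μ+2) := by linarith
  have hD2 : (2*(μ+1)+2 : ℝ) ≠ 0 := by linarith
  have hclear : 0 < x ^ (2*(μ+1)+2) * besselJn (μ+2) x - c * x ^ (2*(μ+1)+2) := by
    have h4 := mul_pos hpos hD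
    have h5 : (x ^ (2*(μ+1)+2) * besselJn (μ+2) x/(2*(μ+2))
        - c * (x ^ (2*(μ+1)+2)/(2*(μ+1)+2))) * (2*(μ+2))
        = x ^ (2*(μ+1)+2) * besselJn (μ+2) x - c * x ^ (2*(μ+1)+2) := by
      rw [show (2*(μ+1)+2 : ℝ) = 2*(μ+2) by ring]
      field_simp
    rwa [h5] at h4
  by_contra hcon
  push_neg at hcon
  have h6 := mul_le_mul_of_nonneg_left hcon hxp.le
  linarith [hclear, h6]

end BesselHuygens

open BesselHuygens in
theorem besselJ_huygens_iff (ν p q j : ℝ) (hν1 : -1 < ν) (hν2 : ν ≤ 0)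
    (hj0 : 0 < j) (hjz : besselJn ν j = 0)
    (hjfirst : ∀ y : ℝ, 0 < y → y < j → besselJn ν y ≠ 0) :
    (∀ x : ℝ, 0 < x → x < j →
      (1 - p) * besselJn (ν + 1) x + p * besselJn (ν + 1) x / besselJn ν x > 1 ∧
      1 > (1 - q) * besselJn (ν + 1) x + q * besselJn (ν + 1) x / besselJn ν x) ↔
    (p ≥ (ν + 1) / (ν + 2) ∧ q ≤ 0) := by
  have hν1' : -1 < ν + 1 := by linarith
  have hν2' : -1 < ν + 2 := by linarith
  have hp1 : (0:ℝ) < ν + 1 := by linarith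
  have hp2 : (0:ℝ) < ν + 2 := by linarith
  have he12 : ν + 1 + 1 = ν + 2 := by ring
  -- positivity of 𝒥_ν on [0, j)
  have hu_pos : ∀ x : ℝ, 0 ≤ x → x < j → 0 < besselJn ν x := by
    intro x hx0 hxj
    rcases eq_or_lt_of_le hx0 with h | h
    · rw [← h, besselJn_zero hν1]; norm_num
    by_contra hc
    push_neg at hc
    rcases eq_or_lt_of_le hc with h0 | h0
    · exact hjfirst x h hxj h0
    · have hcont : ContinuousOn (besselJn ν) (Icc 0 x) :=
        (continuous_besselJn hν1).continuousOn
      have h01 : (0:ℝ) ∈ Ioo (besselJn ν x) (besselJn ν 0) := by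
        rw [besselJn_zero hν1]; exact ⟨h0, one_pos⟩
      obtain ⟨y, hy, hy0⟩ := intermediate_value_Ioo' h.le hcont h01
      exact hjfirst y hy.1 (hy.2.trans hxj) hy0
  have hv_pos : ∀ x : ℝ, 0 < x → x ≤ j → 0 < besselJn (ν+1) x :=
    pos_step hν1 (fun t ht htj => hu_pos t ht.le htj)
  have hw_pos : ∀ x : ℝ, 0 < x → x ≤ j → 0 < besselJn (ν+2) x := by
    intro x hx hxj
    have h2 := pos_step (μ := ν+1) hν1' (b := j)
      (fun t ht htj => hv_pos t ht htj.le) x hx hxj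
    rwa [he12] at h2
  have hv_dec : ∀ x₁ x₂ : ℝ, 0 ≤ x₁ → x₁ < x₂ → x₂ ≤ j →
      besselJn (ν+1) x₂ < besselJn (ν+1) x₁ := by
    apply decr_step hν1' (b := j)
    intro t ht htj
    have := hw_pos t ht htj
    rwa [← he12] at this
  have hv_le_one : ∀ t : ℝ, 0 ≤ t → t ≤ j → besselJn (ν+1) t ≤ 1 := by
    intro t ht htj
    rcases eq_or_lt_of_le ht with h | h
    · rw [← h, besselJn_zero hν1']
    · have h2 := hv_dec 0 t le_rfl h htj
      rw [besselJn_zero hν1'] at h2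
      exact h2.le
  have hu_lt_one : ∀ x : ℝ, 0 < x → x ≤ j → besselJn ν x < 1 := by
    intro x hx hxj
    have h2 := decr_step hν1 (b := j) hv_pos 0 x le_rfl hx hxj
    rwa [besselJn_zero hν1] at h2
  have hone_sub : ∀ x : ℝ, 0 < x → x ≤ j → 2*(ν+1)*(1 - besselJn ν x) ≤ x^2/2 :=
    fun x hx hxj => one_sub_le hν1 hx hxj hv_le_one
  have hwv : ∀ x : ℝ, 0 < x → x ≤ j → besselJn (ν+1) x < besselJn (ν+2) x := by
    intro x hx hxj
    exact step_gt hν1 hx (fun t ht htx => hv_dec t x ht.le htx hxj)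
  -- the key inequality
  have hK : ∀ x : ℝ, 0 < x → x < j →
      (ν+2) * besselJn ν x * (1 - besselJn (ν+1) x)
        < (ν+1) * (besselJn (ν+1) x * (1 - besselJn ν x)) := by
    intro x hx hxj
    have hrec := bessel_rec hν1 x
    have hv := hv_pos x hx hxj.le
    have hw := hwv x hx hxj.le
    have hsub := hone_sub x hx hxj.le
    have hrec' : 4*(ν+1)*(ν+2) * besselJn ν x
        = 4*(ν+1)*(ν+2) * besselJn (ν+1) x - x^2 * besselJn (ν+2) x := by
      rw [hrec]; field_simp [hp1.ne', hp2.ne']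
    have hA' : (4*(ν+1))*(1 - besselJn ν x) ≤ x^2 := by linarith
    have hB : besselJn (ν+1) x * ((4*(ν+1))*(1 - besselJn ν x))
        ≤ besselJn (ν+1) x * x^2 := mul_le_mul_of_nonneg_left hA' hv.le
    have hC : besselJn (ν+1) x * x^2 < besselJn (ν+2) x * x^2 :=
      mul_lt_mul_of_pos_right hw (by positivity)
    have h1' : 4*(ν+1) * (besselJn (ν+1) x * (1 - besselJn ν x))
        < x^2 * besselJn (ν+2) x := by nlinarith [hB, hC]
    have hcomb4 : 4*(ν+1)*((ν+2) * besselJn ν x * (1 - besselJn (ν+1) x)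
        - (ν+1) * (besselJn (ν+1) x * (1 - besselJn ν x)))
        = 4*(ν+1)*(besselJn (ν+1) x * (1 - besselJn ν x)) - x^2 * besselJn (ν+2) x := by
      linear_combination hrec'
    by_contra hcon
    push_neg at hcon
    have h9 : 0 ≤ 4*(ν+1)*((ν+2) * besselJn ν x * (1 - besselJn (ν+1) x)
        - (ν+1) * (besselJn (ν+1) x * (1 - besselJn ν x))) :=
      mul_nonneg (by linarith) (by linarith)
    linarith [hcomb4, h1', h9]
  constructor
  · -- necessity
    intro H
    constructor
    · by_contra hp
      push_neg at hp
      set χ : ℝ → ℝ := fun x => besselJn ν x * (- D (ν+1) x)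
        - p * (besselJn (ν+1) x * (- D ν x)) with hχdef
      have hχcont : Continuous χ := by
        apply Continuous.sub
        · exact (continuous_besselJn hν1).mul (continuous_D hν1').neg
        · exact continuous_const.mul ((continuous_besselJn hν1').mul (continuous_D hν1).neg)
      have hχ0 : 0 < χ 0 := by
        have h4 : 0 < (ν+1) - p*(ν+2) := by
          have := (lt_div_iff₀ hp2).1 hp
          linarith
        simp only [hχdef]
        rw [besselJn_zero hν1, besselJn_zero hν1', D_zero hν1, D_zero hν1', he12]
        have key : (1:ℝ) * (-(-(1/(4*(ν+2))))) - p * (1 * (-(-(1/(4*(ν+1))))))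
            = ((ν+1) - p*(ν+2))/(4*(ν+1)*(ν+2)) := by
          field_simp
        rw [key]
        positivity
      have hopen : {x : ℝ | 0 < χ x} ∈ nhds (0:ℝ) :=
        (isOpen_lt continuous_const hχcont).mem_nhds hχ0
      have hmem : Ioo (0:ℝ) j ∈ nhdsWithin (0:ℝ) (Ioi 0) :=
        Ioo_mem_nhdsGT_of_mem ⟨le_rfl, hj0⟩
      have hint : {x : ℝ | 0 < χ x} ∩ Ioo 0 j ∈ nhdsWithin (0:ℝ) (Ioi 0) :=
        Filter.inter_mem (mem_nhdsWithin_of_mem_nhds hopen) hmem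
      obtain ⟨x, hxχ, hx0, hxj⟩ := Filter.nonempty_of_mem hint
      have hu := hu_pos x hx0.le hxj
      have hH := (H x hx0 hxj).1
      have hH' : besselJn ν x < (1-p) * besselJn (ν+1) x * besselJn ν x
          + p * besselJn (ν+1) x := by
        rw [gt_iff_lt, show (1 - p) * besselJn (ν + 1) x
            + p * besselJn (ν + 1) x / besselJn ν x
            = ((1-p) * besselJn (ν+1) x * besselJn ν x + p * besselJn (ν+1) x) / besselJn ν x
            from by field_simp [hu.ne']; try ring
            , lt_div_iff₀ hu] at hH
        linarith [hH]
      -- ψ = x² χ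
      have hdecu := besselJn_decomp hν1 x
      have hdecv := besselJn_decomp hν1' x
      have hψ : besselJn ν x * (1 - besselJn (ν+1) x)
          - p * (besselJn (ν+1) x * (1 - besselJn ν x)) = x^2 * χ x := by
        simp only [hχdef]
        rw [show (1:ℝ) - besselJn (ν+1) x = -(x^2 * D (ν+1) x) from by linarith [hdecv],
          show (1:ℝ) - besselJn ν x = -(x^2 * D ν x) from by linarith [hdecu]]
        ring
      have hψpos : 0 < x^2 * χ x := mul_pos (by positivity) hxχ
      nlinarith [hψ, hψpos, hH']
    · by_contra hq
      push_neg at hq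
      set φ : ℝ → ℝ := fun x => q * (besselJn (ν+1) x * (1 - besselJn ν x))
        - besselJn ν x * (1 - besselJn (ν+1) x) with hφdef
      have hφcont : Continuous φ := by
        apply Continuous.sub
        · exact continuous_const.mul ((continuous_besselJn hν1').mul
            (continuous_const.sub (continuous_besselJn hν1)))
        · exact (continuous_besselJn hν1).mul
            (continuous_const.sub (continuous_besselJn hν1'))
      have hφj : 0 < φ j := by
        simp only [hφdef]
        rw [hjz]
        have := hv_pos j hj0 le_rfl
        nlinarith [this]
      have hopen : {x : ℝ | 0 < φ x} ∈ nhds j :=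
        (isOpen_lt continuous_const hφcont).mem_nhds hφj
      have hmem : Ioo (0:ℝ) j ∈ nhdsWithin j (Iio j) :=
        Ioo_mem_nhdsLT_of_mem ⟨hj0, le_rfl⟩
      have hint : {x : ℝ | 0 < φ x} ∩ Ioo 0 j ∈ nhdsWithin j (Iio j) :=
        Filter.inter_mem (mem_nhdsWithin_of_mem_nhds hopen) hmem
      obtain ⟨x, hxφ, hx0, hxj⟩ := Filter.nonempty_of_mem hint
      have hu := hu_pos x hx0.le hxj
      have hH := (H x hx0 hxj).2
      have hH' : (1-q) * besselJn (ν+1) x * besselJn ν x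
          + q * besselJn (ν+1) x < besselJn ν x := by
        rw [gt_iff_lt, show (1 - q) * besselJn (ν + 1) x
            + q * besselJn (ν + 1) x / besselJn ν x
            = ((1-q) * besselJn (ν+1) x * besselJn ν x + q * besselJn (ν+1) x) / besselJn ν x
            from by field_simp [hu.ne']; try ring
            , div_lt_iff₀ hu] at hH
        linarith [hH]
      have hφx : 0 < q * (besselJn (ν+1) x * (1 - besselJn ν x))
          - besselJn ν x * (1 - besselJn (ν+1) x) := hxφ
      nlinarith [hφx, hH']
  · -- sufficiency
    rintro ⟨hp, hq⟩ x hx hxj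
    have hu := hu_pos x hx.le hxj
    have hv := hv_pos x hx hxj.le
    have hu1 := hu_lt_one x hx hxj.le
    have hv1 : besselJn (ν+1) x < 1 := by
      have h2 := hv_dec 0 x le_rfl hx hxj.le
      rwa [besselJn_zero hν1'] at h2
    have hKx := hK x hx hxj
    constructor
    · rw [gt_iff_lt, show (1 - p) * besselJn (ν + 1) x
          + p * besselJn (ν + 1) x / besselJn ν x
          = ((1-p) * besselJn (ν+1) x * besselJn ν x + p * besselJn (ν+1) x) / besselJn ν x
          from by field_simp [hu.ne']; try ring
            , lt_div_iff₀ hu]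
      have hvu : 0 < besselJn (ν+1) x * (1 - besselJn ν x) := mul_pos hv (by linarith)
      have hc : (ν+1)/(ν+2) * (besselJn (ν+1) x * (1 - besselJn ν x))
          ≤ p * (besselJn (ν+1) x * (1 - besselJn ν x)) :=
        mul_le_mul_of_nonneg_right hp hvu.le
      have hc2 : besselJn ν x * (1 - besselJn (ν+1) x)
          < (ν+1)/(ν+2) * (besselJn (ν+1) x * (1 - besselJn ν x)) := by
        rw [div_mul_eq_mul_div, lt_div_iff₀ hp2]
        nlinarith [hKx]
      nlinarith [hc, hc2]
    · rw [gt_iff_lt, show (1 - q) * besselJn (ν + 1) x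
          + q * besselJn (ν + 1) x / besselJn ν x
          = ((1-q) * besselJn (ν+1) x * besselJn ν x + q * besselJn (ν+1) x) / besselJn ν x
          from by field_simp [hu.ne']; try ring
            , div_lt_iff₀ hu]
      have h1 : q * (besselJn (ν+1) x * (1 - besselJn ν x)) ≤ 0 :=
        mul_nonpos_of_nonpos_of_nonneg hq
          (mul_nonneg hv.le (by linarith))
      have h2 : 0 < besselJn ν x * (1 - besselJn (ν+1) x) :=
        mul_pos hu (by linarith)
      nlinarith [h1, h2]
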